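/- Suppose q = 1. If γ = cos(kπ/m) for some k, m ∈ ℕ with 0 < k < m and gcd(m, k) = 1, then the matrix AB has order exactly m. If γ is not of the form cos(kπ/m) for any integers k, m with 0 < k < m, then AB has infinite order (i.e., (AB)^n ≠ 1 for all integers n > 0). -/

import Mathlib

noncomputable def chebAux (t : ℝ) : ℕ → ℝ × ℝ
  | 0 => (0, 1)
  | n + 1 => (t * (chebAux t n).1 + (chebAux t n).2, -(chebAux t n).1)

lemma chebAux_zero (t : ℝ) : chebAux t 0 = (0, 1) := rfl

lemma chebAux_succ (t : ℝ) (n : ℕ) :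
    chebAux t (n + 1) = (t * (chebAux t n).1 + (chebAux t n).2, -(chebAux t n).1) := rfl

lemma chebAux_fst_two_step (t : ℝ) (n : ℕ) :
    (chebAux t (n + 2)).1 = t * (chebAux t (n + 1)).1 - (chebAux t n).1 := by
  simp [chebAux_succ]; ring

lemma chebAux_sin (θ : ℝ) (n : ℕ) :
    (chebAux (4 * Real.cos θ ^ 2 - 2) n).1 * Real.sin (2 * θ) = Real.sin (2 * n * θ) := by
  induction n using Nat.twoStepInduction with
  | zero => simp [chebAux_zero]
  | one => simp [chebAux_succ, chebAux_zero]
  | more n ih2 ih1 =>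
    rw [chebAux_fst_two_step]
    push_cast
    push_cast at ih1 ih2
    set c1 := (chebAux (4 * Real.cos θ ^ 2 - 2) (n + 1)).1 with hc1
    have hc2 : Real.cos (2 * θ) = 2 * Real.cos θ ^ 2 - 1 := Real.cos_two_mul θ
    have h1 : 2 * ((n : ℝ) + 2) * θ = 2 * ((n : ℝ) + 1) * θ + 2 * θ := by ring
    have h2 : 2 * (n : ℝ) * θ = 2 * ((n : ℝ) + 1) * θ - 2 * θ := by ring
    rw [h1, Real.sin_add]
    rw [h2, Real.sin_sub] at ih2
    have ht : (4 * Real.cos θ ^ 2 - 2) = 2 * Real.cos (2 * θ) := by rw [hc2]; ring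
    have key : (4 * Real.cos θ ^ 2 - 2) * (c1 * Real.sin (2 * θ))
        = 2 * Real.cos (2 * θ) * Real.sin (2 * ((n : ℝ) + 1) * θ) := by rw [ih1, ht]
    linear_combination key - ih2

lemma chebAux_ge (t : ℝ) (ht : 2 ≤ t) (n : ℕ) :
    (n : ℝ) ≤ (chebAux t n).1 ∧ (chebAux t n).1 + 1 ≤ (chebAux t (n + 1)).1 := by
  induction n with
  | zero => norm_num [chebAux_zero, chebAux_succ]
  | succ n ih =>
    obtain ⟨h1, h2⟩ := ih
    have hn : ((n : ℝ) + 1) ≤ (chebAux t (n + 1)).1 := by linarith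
    refine ⟨by push_cast; linarith, ?_⟩
    rw [chebAux_fst_two_step]
    have hnn : (0:ℝ) ≤ (n:ℝ) := Nat.cast_nonneg n
    nlinarith


set_option maxHeartbeats 1000000 in
/-- Let `𝒜` be a (nontrivial) commutative `ℝ`-algebra, `q^{1/2}` and `X` units
of `𝒜`, `q = (q^{1/2})²`, `γ ∈ ℝ`, and let
`A = [[-1, 2γ q^{1/2} X], [0, q]]`, `B = [[q, 0], [2γ q^{1/2} X⁻¹, -1]]`.
Suppose `q = 1`.  If `γ = cos (kπ/m)` with `0 < k < m` and `gcd (m, k) = 1`, then `AB`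
has order exactly `m`; if `γ` is not of the form `cos (kπ/m)` with `0 < k < m`, then
`AB` has infinite order, i.e. `(AB)ⁿ ≠ 1` for all integers `n > 0`. -/
theorem stmt4 {𝒜 : Type*} [CommRing 𝒜] [Nontrivial 𝒜] [Algebra ℝ 𝒜] (q2 X : 𝒜ˣ) (γ : ℝ)
    (A B : Matrix (Fin 2) (Fin 2) 𝒜)
    (hA : A = !![-1, algebraMap ℝ 𝒜 (2 * γ) * (q2 : 𝒜) * (X : 𝒜);
                 0, (q2 : 𝒜) ^ 2])
    (hB : B = !![(q2 : 𝒜) ^ 2, 0;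
                 algebraMap ℝ 𝒜 (2 * γ) * (q2 : 𝒜) * ((X⁻¹ : 𝒜ˣ) : 𝒜), -1])
    (hq : (q2 : 𝒜) ^ 2 = 1) :
    (∀ k m : ℕ, 0 < k → k < m → Nat.gcd m k = 1 → γ = Real.cos (k * Real.pi / m) →
      orderOf (A * B) = m) ∧
    ((¬ ∃ k m : ℕ, 0 < k ∧ k < m ∧ γ = Real.cos (k * Real.pi / m)) →
      ∀ n : ℕ, 0 < n → (A * B) ^ n ≠ 1) := by
  have hX : (X : 𝒜) * ((X⁻¹ : 𝒜ˣ) : 𝒜) = 1 := X.mul_inv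
  set c : 𝒜 := algebraMap ℝ 𝒜 (2 * γ) with hc
  set s : 𝒜 := (q2 : 𝒜) with hs
  clear_value c s
  have hM : A * B = !![c * c - 1, -(c * s * (X : 𝒜)); c * s * ((X⁻¹ : 𝒜ˣ) : 𝒜), -1] := by
    subst hA hB
    ext i j
    fin_cases i <;> fin_cases j <;>
      simp [Matrix.mul_apply, Fin.sum_univ_two]
    · linear_combination (c ^ 2 - 1) * hq + c ^ 2 * s ^ 2 * hX
    · linear_combination (c * s * ((X⁻¹ : 𝒜ˣ) : 𝒜)) * hq
    · exact hq
  have hT : algebraMap ℝ 𝒜 (4 * γ ^ 2 - 2) = c * c - 2 := by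
    have h4 : 4 * γ ^ 2 - 2 = (2 * γ) * (2 * γ) - 2 := by ring
    rw [h4, map_sub, map_mul, map_ofNat, hc]
  have hM2 : (A * B) * (A * B) = algebraMap ℝ 𝒜 (4 * γ ^ 2 - 2) • (A * B) - 1 := by
    rw [hM, hT]
    ext i j
    fin_cases i <;> fin_cases j <;>
      simp [Matrix.mul_apply, Fin.sum_univ_two, Matrix.smul_apply, smul_eq_mul]
    · linear_combination (-(c ^ 2 * s ^ 2)) * hX + (-(c ^ 2)) * hq
    · ring
    · ring
    · linear_combination (-(c ^ 2 * s ^ 2)) * hX + (-(c ^ 2)) * hq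
  have hpow : ∀ n : ℕ, (A * B) ^ n =
      algebraMap ℝ 𝒜 ((chebAux (4 * γ ^ 2 - 2) n).1) • (A * B)
        + algebraMap ℝ 𝒜 ((chebAux (4 * γ ^ 2 - 2) n).2) • (1 : Matrix (Fin 2) (Fin 2) 𝒜) := by
    intro n
    induction n with
    | zero => simp [chebAux_zero]
    | succ n ih =>
      rw [pow_succ, ih, add_mul, smul_mul_assoc, smul_mul_assoc, one_mul, hM2,
        smul_sub, smul_smul, ← map_mul, chebAux_succ]
      simp only [map_add, map_mul, map_neg, add_smul, neg_smul]
      module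
  have inj : Function.Injective (algebraMap ℝ 𝒜) := RingHom.injective _
  have hXi : ((X⁻¹ : 𝒜ˣ) : 𝒜) * (X : 𝒜) = 1 := X.inv_mul
  have hext : ∀ n : ℕ, (A * B) ^ n = 1 →
      (chebAux (4 * γ ^ 2 - 2) n).1 * (2 * γ) = 0 ∧
      (chebAux (4 * γ ^ 2 - 2) n).2 - (chebAux (4 * γ ^ 2 - 2) n).1 = 1 := by
    intro n h
    rw [hpow n, hM] at h
    have h10 := congrFun (congrFun h 1) 0
    have h11 := congrFun (congrFun h 1) 1
    simp [Matrix.one_apply] at h10 h11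
    constructor
    · rcases h10 with h10 | h10
      · rw [h10, zero_mul]
      · have hc0 : c = 0 := by
          calc c = c * s * s := by rw [mul_assoc, ← sq, hq, mul_one]
          _ = 0 := by rw [h10, zero_mul]
        have h20 : (2 : ℝ) * γ = 0 :=
          inj (show algebraMap ℝ 𝒜 (2 * γ) = algebraMap ℝ 𝒜 0 by
            rw [map_zero, ← hc]; exact hc0)
        rw [h20, mul_zero]
    · apply inj
      rw [map_sub, map_one, Algebra.algebraMap_eq_smul_one, Algebra.algebraMap_eq_smul_one]
      have hab : (chebAux (4 * γ ^ 2 - 2) n).2 • (1 : 𝒜) - (chebAux (4 * γ ^ 2 - 2) n).1 • (1 : 𝒜)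
          = -((chebAux (4 * γ ^ 2 - 2) n).1 • (1 : 𝒜)) + (chebAux (4 * γ ^ 2 - 2) n).2 • (1 : 𝒜) := by
        abel
      rw [hab, h11]
  have hrev : ∀ n : ℕ, (chebAux (4 * γ ^ 2 - 2) n).1 = 0 → (chebAux (4 * γ ^ 2 - 2) n).2 = 1 →
      (A * B) ^ n = 1 := by
    intro n h1 h2
    rw [hpow n, h1, h2]
    simp
  constructor
  · -- Branch 1: finite order
    intro k m hk hkm hgcd hγ
    have hm0 : 0 < m := lt_trans hk hkm
    by_cases hγ0 : γ = 0
    · -- γ = 0 : then m = 2 and A*B = -1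
      have hcos0 : Real.cos ((k : ℝ) * Real.pi / (m : ℝ)) = 0 := by rw [← hγ]; exact hγ0
      obtain ⟨j, hj⟩ := Real.cos_eq_zero_iff.mp hcos0
      have hm' : ((m : ℝ)) ≠ 0 := Nat.cast_ne_zero.mpr (by omega)
      have h4 : (2 * (k : ℝ)) * Real.pi = ((2 * (j : ℝ) + 1) * (m : ℝ)) * Real.pi := by
        field_simp at hj
        linear_combination Real.pi * hj
      have h5 : (2 * (k : ℝ)) = (2 * (j : ℝ) + 1) * (m : ℝ) :=
        mul_right_cancel₀ Real.pi_ne_zero h4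
      have h6 : (2 * (k : ℤ)) = (2 * j + 1) * (m : ℤ) := by exact_mod_cast h5
      have hmZ : (0 : ℤ) < (m : ℤ) := by exact_mod_cast hm0
      have hkZ : (0 : ℤ) < (k : ℤ) := by exact_mod_cast hk
      have hkmZ : (k : ℤ) < (m : ℤ) := by exact_mod_cast hkm
      have hj0 : j = 0 := by
        rcases lt_trichotomy j 0 with hj' | hj' | hj'
        · exfalso; nlinarith
        · exact hj'
        · exfalso; nlinarith
      have hm2k : m = 2 * k := by
        rw [hj0] at h6
        exact_mod_cast (by linarith [h6] : (m : ℤ) = 2 * (k : ℤ))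
      have hk1 : k = 1 := by
        have hdk : k ∣ Nat.gcd m k := Nat.dvd_gcd ⟨2, by omega⟩ dvd_rfl
        rw [hgcd] at hdk
        exact Nat.dvd_one.mp hdk
      have hc0 : c = 0 := by rw [hc, hγ0]; simp
      have hMneg : A * B = -1 := by
        rw [hM, hc0]
        ext i j'
        fin_cases i <;> fin_cases j' <;> simp [Matrix.one_apply]
      have hne1 : A * B ≠ 1 := by
        rw [hMneg]
        intro hcon
        have h00 : (-1 : Matrix (Fin 2) (Fin 2) 𝒜) 0 0 = (1 : Matrix (Fin 2) (Fin 2) 𝒜) 0 0 := by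
          rw [hcon]
        simp [Matrix.one_apply] at h00
        have hcontra : (-1 : ℝ) = 1 := inj (by rw [map_neg, map_one]; exact h00)
        norm_num at hcontra
      haveI : Fact (Nat.Prime 2) := ⟨Nat.prime_two⟩
      have ho : orderOf (A * B) = 2 := orderOf_eq_prime (by rw [hMneg]; exact neg_one_sq) hne1
      rw [ho]; omega
    · -- γ ≠ 0
      set θ : ℝ := (k : ℝ) * Real.pi / (m : ℝ) with hθ
      have hcosθ : Real.cos θ = γ := hγ.symm
      have hmR : (0 : ℝ) < (m : ℝ) := by exact_mod_cast hm0
      have hkR : (0 : ℝ) < (k : ℝ) := by exact_mod_cast hk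
      have hθpos : 0 < θ := div_pos (mul_pos hkR Real.pi_pos) hmR
      have hθlt : θ < Real.pi := by
        rw [hθ, div_lt_iff₀ hmR]
        have hkmR : (k : ℝ) < (m : ℝ) := by exact_mod_cast hkm
        nlinarith [Real.pi_pos]
      have hsθ : 0 < Real.sin θ := Real.sin_pos_of_pos_of_lt_pi hθpos hθlt
      have hs2θ : Real.sin (2 * θ) ≠ 0 := by
        rw [Real.sin_two_mul, hcosθ]
        exact mul_ne_zero (mul_ne_zero two_ne_zero hsθ.ne') hγ0
      have hkey : ∀ n : ℕ, (chebAux (4 * γ ^ 2 - 2) n).1 * Real.sin (2 * θ)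
          = Real.sin (2 * (n : ℝ) * θ) := by
        intro n
        have h := chebAux_sin θ n
        rwa [hcosθ] at h
      have hMm : (A * B) ^ m = 1 := by
        refine hrev m ?_ ?_
        · have h1 := hkey m
          have h2mθ : 2 * (m : ℝ) * θ = ((2 * k : ℕ) : ℝ) * Real.pi := by
            rw [hθ]; push_cast; field_simp
          rw [h2mθ, Real.sin_nat_mul_pi] at h1
          exact (mul_eq_zero.mp h1).resolve_right hs2θ
        · obtain ⟨m', rfl⟩ : ∃ m', m = m' + 1 := ⟨m - 1, by omega⟩
          have h1 := hkey m'
          have hm1 : ((m' : ℝ) + 1) ≠ 0 := by positivity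
          have e : 2 * (m' : ℝ) * θ = ((2 * k : ℕ) : ℝ) * Real.pi - 2 * θ := by
            rw [hθ]; push_cast; field_simp; ring
          rw [e, Real.sin_sub] at h1
          have hs0 : Real.sin (((2 * k : ℕ) : ℝ) * Real.pi) = 0 := Real.sin_nat_mul_pi _
          have hc0' : Real.cos (((2 * k : ℕ) : ℝ) * Real.pi) = 1 := by
            rw [show ((2 * k : ℕ) : ℝ) * Real.pi = ((k : ℤ) : ℝ) * (2 * Real.pi) by
              push_cast; ring]
            exact Real.cos_int_mul_two_pi k
          rw [hs0, hc0'] at h1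
          have ham' : (chebAux (4 * γ ^ 2 - 2) m').1 = -1 := by
            have h3 : (chebAux (4 * γ ^ 2 - 2) m').1 * Real.sin (2 * θ)
                = (-1) * Real.sin (2 * θ) := by linarith [h1]
            exact mul_right_cancel₀ hs2θ h3
          rw [chebAux_succ]
          show -(chebAux (4 * γ ^ 2 - 2) m').1 = 1
          rw [ham']; norm_num
      have hdvd : orderOf (A * B) ∣ m := orderOf_dvd_of_pow_eq_one hMm
      have hopos : 0 < orderOf (A * B) := by
        rcases Nat.eq_zero_or_pos (orderOf (A * B)) with h0 | h
        · rw [h0] at hdvd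
          rw [zero_dvd_iff] at hdvd
          omega
        · exact h
      have hmdvd : ∀ N : ℕ, 0 < N → (A * B) ^ N = 1 → m ∣ N := by
        intro N hN hpow1
        obtain ⟨ha, hb⟩ := hext N hpow1
        have haN : (chebAux (4 * γ ^ 2 - 2) N).1 = 0 := by
          rcases mul_eq_zero.mp ha with h | h
          · exact h
          · exact absurd (show γ = 0 by linarith) hγ0
        have h1 := hkey N
        rw [haN, zero_mul] at h1
        obtain ⟨N', rfl⟩ : ∃ N', N = N' + 1 := ⟨N - 1, by omega⟩
        have haN' : (chebAux (4 * γ ^ 2 - 2) N').1 = -1 := by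
          have hbv : (chebAux (4 * γ ^ 2 - 2) (N' + 1)).2 = 1 := by linarith [hb, haN]
          rw [chebAux_succ] at hbv
          have hbv2 : -(chebAux (4 * γ ^ 2 - 2) N').1 = 1 := hbv
          linarith [hbv2]
        have h2 := hkey N'
        rw [haN', neg_one_mul] at h2
        have e : 2 * (N' : ℝ) * θ = 2 * ((N' + 1 : ℕ) : ℝ) * θ - 2 * θ := by push_cast; ring
        rw [e, Real.sin_sub, ← h1, zero_mul, zero_sub] at h2
        have hcos1 : Real.cos (2 * ((N' + 1 : ℕ) : ℝ) * θ) = 1 := by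
          have h3 : Real.cos (2 * ((N' + 1 : ℕ) : ℝ) * θ) * Real.sin (2 * θ)
              = 1 * Real.sin (2 * θ) := by linarith [h2]
          exact mul_right_cancel₀ hs2θ h3
        obtain ⟨j, hj⟩ := (Real.cos_eq_one_iff _).mp hcos1
        have hm' : ((m : ℝ)) ≠ 0 := ne_of_gt hmR
        have h4 : ((j : ℝ) * (m : ℝ)) * Real.pi = (((N' + 1 : ℕ) : ℝ) * (k : ℝ)) * Real.pi := by
          rw [hθ] at hj
          field_simp at hj
          push_cast at hj ⊢
          linear_combination Real.pi * hj
        have h5 : (j : ℝ) * (m : ℝ) = ((N' + 1 : ℕ) : ℝ) * (k : ℝ) :=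
          mul_right_cancel₀ Real.pi_ne_zero h4
        have h6 : ((N' + 1 : ℕ) : ℤ) * (k : ℤ) = j * (m : ℤ) := by exact_mod_cast h5.symm
        have h7 : (m : ℤ) ∣ (((N' + 1) * k : ℕ) : ℤ) := ⟨j, by push_cast at h6 ⊢; linear_combination h6⟩
        have h8 : m ∣ (N' + 1) * k := by exact_mod_cast h7
        exact Nat.Coprime.dvd_of_dvd_mul_right (show Nat.Coprime m k from hgcd) h8
      exact Nat.dvd_antisymm hdvd (hmdvd _ hopos (pow_orderOf_eq_one _))
  · -- Branch 2: infinite order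
    intro hne n hn hcon
    have hγ0 : γ ≠ 0 := by
      intro h0
      apply hne
      refine ⟨1, 2, one_pos, one_lt_two, ?_⟩
      rw [h0]
      norm_num [Real.cos_pi_div_two]
    obtain ⟨ha, hb⟩ := hext n hcon
    have haN : (chebAux (4 * γ ^ 2 - 2) n).1 = 0 := by
      rcases mul_eq_zero.mp ha with h | h
      · exact h
      · exact absurd (show γ = 0 by linarith) hγ0
    by_cases habs : |γ| < 1
    · have hγ1 : -1 < γ := (abs_lt.mp habs).1
      have hγ2 : γ < 1 := (abs_lt.mp habs).2
      set θ := Real.arccos γ with hθ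
      have hcosθ : Real.cos θ = γ := Real.cos_arccos hγ1.le hγ2.le
      have hθpos : 0 < θ := Real.arccos_pos.mpr hγ2
      have hθlt : θ < Real.pi := by
        refine lt_of_le_of_ne (Real.arccos_le_pi γ) fun h => ?_
        have : γ = -1 := by rw [← hcosθ, h, Real.cos_pi]
        linarith
      have hsθ : 0 < Real.sin θ := Real.sin_pos_of_pos_of_lt_pi hθpos hθlt
      have hs2θ : Real.sin (2 * θ) ≠ 0 := by
        rw [Real.sin_two_mul, hcosθ]
        exact mul_ne_zero (mul_ne_zero two_ne_zero hsθ.ne') hγ0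
      have h1 := chebAux_sin θ n
      rw [hcosθ, haN, zero_mul] at h1
      obtain ⟨j, hj⟩ := Real.sin_eq_zero_iff.mp h1.symm
      have hn' : (0 : ℝ) < (n : ℝ) := by exact_mod_cast hn
      have hjpos : 0 < j := by
        by_contra hle
        push_neg at hle
        have hjR : (j : ℝ) ≤ 0 := by exact_mod_cast hle
        nlinarith [Real.pi_pos, hj, hθpos]
      have hjlt : j < 2 * n := by
        have hjR : (j : ℝ) < 2 * (n : ℝ) := by
          have h2 : (j : ℝ) * Real.pi < 2 * (n : ℝ) * Real.pi := by
            rw [hj]; nlinarith [hθlt]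
          nlinarith [Real.pi_pos]
        exact_mod_cast hjR
      apply hne
      refine ⟨j.toNat, 2 * n, by omega, by omega, ?_⟩
      rw [← hcosθ]
      congr 1
      have hjt : ((j.toNat : ℕ) : ℝ) = (j : ℝ) := by
        exact_mod_cast congrArg (fun z : ℤ => (z : ℝ)) (Int.toNat_of_nonneg hjpos.le)
      rw [hjt]
      push_cast
      rw [eq_div_iff (by positivity : (2 : ℝ) * (n : ℝ) ≠ 0)]
      first
        | linear_combination hj
        | linear_combination -hj
        | (field_simp; first | linear_combination hj | linear_combination -hj)
    · push_neg at habs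
      have ht : (2 : ℝ) ≤ 4 * γ ^ 2 - 2 := by nlinarith [sq_abs γ, abs_nonneg γ]
      have hge := (chebAux_ge _ ht n).1
      have hn' : (1 : ℝ) ≤ (n : ℝ) := by exact_mod_cast hn
      rw [haN] at hge
      linarith
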